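/- Let h be the morphism from {0,1,2}-words to binary words defined by h(0) = 010001, h(1) = 0100010001, h(2) = 01000100010001. For every squarefree word w over {0,1,2}, the word h(w) is good and every nonempty factor of h(w) has exponent at most 15/4; moreover, if |w| ≥ 5, then h(w) contains a factor of exponent exactly 15/4. -/

import Mathlib

/-- Bitwise complement of a binary word. -/
def comp (x : List Bool) : List Bool := x.map (fun b => !b)

/-- An antisquare is a nonempty word of the form `y ++ comp y`. -/
def Antisquare (x : List Bool) : Prop := ∃ y : List Bool, y ≠ [] ∧ x = y ++ comp y

/-- `w` has period `p ≥ 1` if `w[i] = w[i+p]` whenever both indices are valid. -/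
def HasPeriod (w : List Bool) (p : ℕ) : Prop :=
  1 ≤ p ∧ ∀ i, i + p < w.length → w.getD i false = w.getD (i + p) false

/-- The exponent of a finite word: its length divided by its least period. -/
noncomputable def exponent (w : List Bool) : ℝ :=
  (w.length : ℝ) / ((sInf {p : ℕ | HasPeriod w p} : ℕ) : ℝ)

/-- `u` is a factor of the right-infinite word `w : ℕ → Bool`. -/
def FactorInf (u : List Bool) (w : ℕ → Bool) : Prop :=
  ∃ i : ℕ, u = (List.range u.length).map (fun t => w (i + t))

/-- `u` is a factor of the bi-infinite word `w : ℤ → Bool`. -/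
def FactorBi (u : List Bool) (w : ℤ → Bool) : Prop :=
  ∃ i : ℤ, u = (List.range u.length).map (fun t => w (i + (t : ℤ)))

/-- A binary word is good if its only antisquare factors are `01` and `10`. -/
def Good (w : List Bool) : Prop :=
  ∀ u, u <:+: w → Antisquare u → u = [false, true] ∨ u = [true, false]

/-- The morphism h: 0 → 010001, 1 → 0100010001, 2 → 01000100010001. -/
def hM : Fin 3 → List Bool
  | 0 => [false, true, false, false, false, true]
  | 1 => [false, true, false, false, false, true, false, false, false, true]
  | 2 => [false, true, false, false, false, true, false, false, false, true,
          false, false, false, true]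

/-- A word over {0,1,2} is squarefree if it contains no factor uu with u nonempty. -/
def SquarefreeWord (w : List (Fin 3)) : Prop :=
  ∀ u : List (Fin 3), u ≠ [] → ¬ (u ++ u) <:+: w

namespace Stmt18

abbrev hW (v : List (Fin 3)) : List Bool := (v.map hM).flatten

def wordsLe : ℕ → List (List (Fin 3))
  | 0 => [[]]
  | n+1 => [] :: (wordsLe n).flatMap (fun v => [0 :: v, 1 :: v, 2 :: v])

def fac (W : List Bool) (i n : ℕ) : List Bool := (W.drop i).take n
def facs (W : List Bool) (n : ℕ) : List (List Bool) :=
  (List.range (W.length + 1 - n)).map (fun i => fac W i n)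

def periodB (u : List Bool) (p : ℕ) : Bool := u.drop p == u.take (u.length - p)

def antisqB (u : List Bool) : Bool :=
  !(u.isEmpty) && (u.length % 2 == 0) && (u.drop (u.length / 2) == comp (u.take (u.length / 2)))

def hasSquareB (v : List (Fin 3)) : Bool :=
  (List.range (v.length + 1)).any fun l =>
    decide (0 < l) && ((List.range (v.length + 1)).any fun i =>
      decide (i + 2*l ≤ v.length) && ((v.drop i).take l == (v.drop (i+l)).take l))

def checkOne (v : List (Fin 3)) : Bool :=
  hasSquareB v ||
  (((List.range 7).all fun p => (p == 0) ||
      ((facs (hW v) (15*p/4+1)).all fun u => !periodB u p)) &&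
   (([4,6,8] : List ℕ).all fun L => (facs (hW v) L).all fun u => !antisqB u) &&
   ((List.range 7).all fun L => (facs (hW v) L).all fun u => decide (u.count true ≤ 2)))

def masterCheck : Bool := (wordsLe 5).all checkOne

def check4 : Bool := (wordsLe 4).all fun v =>
  !(v.length == 4) || v.any (fun a => a == 2) || hasSquareB v

set_option maxRecDepth 10000 in
theorem check4_true : check4 = true := by decide

set_option maxRecDepth 100000 in
set_option maxRecDepth 100000 in
set_option maxHeartbeats 4000000 in
theorem masterCheck_true : masterCheck = true := by decide

-- getD toolkit
lemma getD_eq_gE (l : List Bool) (i : ℕ) (h : i < l.length) : l.getD i false = l[i] := by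
  simp [List.getD_eq_getElem?_getD, List.getElem?_eq_getElem h]

lemma getD_append_l (a b : List Bool) (i : ℕ) (h : i < a.length) :
    (a ++ b).getD i false = a.getD i false := by
  simp [List.getD_eq_getElem?_getD, List.getElem?_append_left h]

lemma getD_drop (l : List Bool) (m i : ℕ) :
    (l.drop m).getD i false = l.getD (m + i) false := by
  simp [List.getD_eq_getElem?_getD, List.getElem?_drop]

lemma getD_take (l : List Bool) (n i : ℕ) (h : i < n) :
    (l.take n).getD i false = l.getD i false := by
  simp [List.getD_eq_getElem?_getD, List.getElem?_take, h]

-- infix positional characterization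
lemma infix_iff_exists (u W : List Bool) :
    u <:+: W ↔ ∃ s, s + u.length ≤ W.length ∧ u = (W.drop s).take u.length := by
  constructor
  · rintro ⟨l, r, h⟩
    refine ⟨l.length, ?_, ?_⟩
    · have := congrArg List.length h
      simp at this; omega
    · have hd : W.drop l.length = u ++ r := by
        rw [← h, List.append_assoc, List.drop_left]
      rw [hd, List.take_left' rfl]
  · rintro ⟨s, hs, h⟩
    rw [h]
    exact ((List.take_prefix _ _).isInfix).trans ((List.drop_suffix s W).isInfix)

lemma getD_of_infix {u W : List Bool} {s : ℕ} (h : u = (W.drop s).take u.length)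
    {i : ℕ} (hi : i < u.length) : u.getD i false = W.getD (s + i) false := by
  conv_lhs => rw [h]
  rw [getD_take _ _ _ hi, getD_drop]

lemma mem_facs {W u : List Bool} {n : ℕ} (h : u <:+: W) (hn : u.length = n) :
    u ∈ facs W n := by
  obtain ⟨s, hs, he⟩ := (infix_iff_exists u W).1 h
  refine List.mem_map.2 ⟨s, List.mem_range.2 (by omega), ?_⟩
  rw [fac, ← hn, ← he]

-- wordsLe completeness
lemma mem_wordsLe : ∀ (n : ℕ) (v : List (Fin 3)), v.length ≤ n → v ∈ wordsLe n := by
  intro n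
  induction n with
  | zero => intro v hv; simp [List.length_eq_zero_iff] at hv; simp [hv, wordsLe]
  | succ n ih =>
    intro v hv
    match v with
    | [] => simp [wordsLe]
    | a :: v' =>
      have hv' : v' ∈ wordsLe n := ih v' (by simpa using Nat.lt_succ_iff.1 hv)
      simp only [wordsLe, List.mem_cons, List.mem_flatMap]
      right
      exact ⟨v', hv', by fin_cases a <;> simp⟩

-- squarefree tools
lemma sqf_infix {w v : List (Fin 3)} (hw : SquarefreeWord w) (h : v <:+: w) :
    SquarefreeWord v := fun u hu hsq => hw u hu (hsq.trans h)

lemma hasSquareB_spec {v : List (Fin 3)} (h : hasSquareB v = true) : ¬ SquarefreeWord v := by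
  intro hsf
  simp only [hasSquareB, List.any_eq_true, List.mem_range, Bool.and_eq_true, decide_eq_true_eq,
    beq_iff_eq] at h
  obtain ⟨l, -, hl, i, -, hle, heq⟩ := h
  apply hsf ((v.drop i).take l)
  · intro hemp
    have := congrArg List.length hemp
    simp at this; omega
  · have h2 : (v.drop i).take l ++ (v.drop i).take l = (v.drop i).take (l + l) := by
      rw [List.take_add, List.drop_drop]
      rw [show i + l = l + i from by omega] at heq ⊢
      rw [← heq]
    rw [h2]
    exact ((List.take_prefix _ _).isInfix).trans ((List.drop_suffix i v).isInfix)

lemma periodB_spec {u : List Bool} {p : ℕ} (h : HasPeriod u p) (hp : p < u.length) :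
    periodB u p = true := by
  rw [periodB, beq_iff_eq]
  apply List.ext_getElem
  · simp
  · intro n h1 h2
    have hn : n + p < u.length := by simp at h1; omega
    rw [List.getElem_drop, List.getElem_take]
    rw [← getD_eq_gE _ _ (show p + n < u.length by omega),
        ← getD_eq_gE _ _ (show n < u.length by omega)]
    rw [show p + n = n + p from by omega]
    exact (h.2 n hn).symm

lemma antisqB_spec {u : List Bool} (h : Antisquare u) : antisqB u = true := by
  obtain ⟨y, hy, rfl⟩ := h
  have hlc : (comp y).length = y.length := by simp [comp]
  have hl : (y ++ comp y).length = 2 * y.length := by simp [hlc]; omega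
  rw [antisqB]
  simp only [Bool.and_eq_true, beq_iff_eq, Bool.not_eq_true']
  refine ⟨⟨by simp [List.isEmpty_iff]; intro h'; simp [h'] at hy, by omega⟩, ?_⟩
  have h2 : (y ++ comp y).length / 2 = y.length := by omega
  rw [h2, List.drop_left, List.take_left' rfl]
-- morphism basics
lemma hW_cons (a : Fin 3) (v : List (Fin 3)) : hW (a :: v) = hM a ++ hW v := by
  simp [hW]

lemma hW_append (v v' : List (Fin 3)) : hW (v ++ v') = hW v ++ hW v' := by
  simp [hW]

lemma hM_len_lb (a : Fin 3) : 6 ≤ (hM a).length := by fin_cases a <;> decide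
lemma hM_len_ub (a : Fin 3) : (hM a).length ≤ 14 := by fin_cases a <;> decide
lemma hM_len_inj {a b : Fin 3} (h : (hM a).length = (hM b).length) : a = b := by
  fin_cases a <;> fin_cases b <;> simp_all [hM]

-- spanning lemmas
lemma span_prefix : ∀ (w : List (Fin 3)) (u : List Bool), u <+: hW w →
    ∃ v, v <+: w ∧ u <+: hW v ∧ 6 * v.length ≤ u.length + 5 := by
  intro w
  induction w with
  | nil =>
    intro u hu
    have hu0 : u = [] := List.prefix_nil.1 (by simpa [hW] using hu)
    exact ⟨[], List.nil_prefix, by simp [hu0], by simp [hu0]⟩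
  | cons a w' ih =>
    intro u hu
    rw [hW_cons] at hu
    rcases eq_or_ne u.length 0 with h0 | h0
    · exact ⟨[], List.nil_prefix, by simp [List.length_eq_zero_iff.1 h0], by simp [h0]⟩
    rcases le_or_gt u.length (hM a).length with hle | hlt
    · refine ⟨[a], ?_, ?_, ?_⟩
      · exact ⟨w', rfl⟩
      · have h1 : u = (hM a).take u.length := by
          have h2 := List.prefix_iff_eq_take.1 hu
          rwa [List.take_append_of_le_length hle] at h2
        have : u <+: hM a := h1 ▸ List.take_prefix _ _
        simpa [hW] using this
      · simp; omega
    · set u'' := (hW w').take (u.length - (hM a).length) with hu''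
      have hdec : u = hM a ++ u'' := by
        have h2 := List.prefix_iff_eq_take.1 hu
        have h3 : u.length = (hM a).length + (u.length - (hM a).length) := by omega
        rw [h3, List.take_length_add_append] at h2
        exact h2
      obtain ⟨v', hv'w, hv'p, hv'l⟩ := ih u'' (List.take_prefix _ _)
      refine ⟨a :: v', ?_, ?_, ?_⟩
      · rcases hv'w with ⟨t, ht⟩; exact ⟨t, by rw [List.cons_append, ht]⟩
      · rw [hW_cons, hdec]
        exact (List.prefix_append_right_inj (hM a)).2 hv'p
      · have hlen : u.length = (hM a).length + u''.length := by
          rw [hdec]; simp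
        have h6 := hM_len_lb a
        simp only [List.length_cons]
        omega
lemma span_infix : ∀ (w : List (Fin 3)) (u : List Bool), u <:+: hW w →
    ∃ v, v <:+: w ∧ u <:+: hW v ∧ 6 * v.length ≤ u.length + 11 := by
  intro w
  induction w with
  | nil =>
    intro u hu
    have hu0 : u = [] := by
      have := List.eq_nil_of_infix_nil (by simpa [hW] using hu)
      exact this
    exact ⟨[], List.nil_infix, by simp [hu0], by simp [hu0]⟩
  | cons a w' ih =>
    intro u hu
    rw [hW_cons] at hu
    obtain ⟨s, hs, he⟩ := (infix_iff_exists _ _).1 hu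
    have hxy : (hM a ++ hW w').length = (hM a).length + (hW w').length := by simp
    rcases le_or_gt (hM a).length s with hsx | hsx
    · -- u lies inside hW w'
      have hu' : u <:+: hW w' := by
        apply (infix_iff_exists _ _).2
        rw [List.drop_append,
          List.drop_eq_nil_of_le (by omega : (hM a).length ≤ s), List.nil_append] at he
        exact ⟨s - (hM a).length, by omega, he⟩
      obtain ⟨v, h1, h2, h3⟩ := ih u hu'
      exact ⟨v, List.infix_cons h1, h2, h3⟩
    · have hdrop : (hM a ++ hW w').drop s = (hM a).drop s ++ hW w' := by
        rw [List.drop_append, Nat.sub_eq_zero_of_le (le_of_lt hsx),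
          List.drop_zero]
      rcases le_or_gt u.length ((hM a).length - s) with hlen | hlen
      · -- u lies inside hM a
        refine ⟨[a], ⟨[], w', by simp⟩, ?_,
          by simp only [List.length_cons, List.length_nil]; omega⟩
        have : u <:+: hM a := by
          apply (infix_iff_exists _ _).2
          rw [hdrop, List.take_append,
            Nat.sub_eq_zero_of_le (by simp; omega : u.length ≤ ((hM a).drop s).length),
            List.take_zero, List.append_nil] at he
          exact ⟨s, by omega, he⟩
        simpa [hW] using this
      · -- u straddles
        set B := (hW w').take (u.length - ((hM a).length - s)) with hB
        have hdec : u = (hM a).drop s ++ B := by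
          conv_lhs => rw [he]
          rw [hdrop, List.take_append,
            List.take_of_length_le (show ((hM a).drop s).length ≤ u.length from by simp; omega),
            List.length_drop, hB]
        obtain ⟨v', h1, h2, h3⟩ := span_prefix w' B (List.take_prefix _ _)
        refine ⟨a :: v', ?_, ?_, ?_⟩
        · rcases h1 with ⟨t, ht⟩
          exact ⟨[], t, by simpa using ht⟩
        · obtain ⟨r, hr⟩ := h2
          refine ⟨(hM a).take s, r, ?_⟩
          rw [hdec, hW_cons, ← hr, ← List.append_assoc, ← List.append_assoc,
            List.take_append_drop]
        · have hBlen : B.length ≤ u.length := by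
            rw [hdec]; simp
          simp only [List.length_cons]
          omega
-- counting
lemma count_comp (y : List Bool) : (comp y).count true = y.length - y.count true := by
  induction y with
  | nil => rfl
  | cons b t ih =>
    have hle := List.count_le_length (a := true) (l := t)
    cases b <;> simp [comp, List.count_cons] at ih ⊢ <;> omega

lemma count_antisq (y : List Bool) : (y ++ comp y).count true = y.length := by
  rw [List.count_append, count_comp]
  have := List.count_le_length (a := true) (l := y)
  omega

lemma count_chunks (W : List Bool)
    (hsmall : ∀ f, f <:+: W → f.length ≤ 6 → f.count true ≤ 2) :
    ∀ (n : ℕ) (u : List Bool), u.length = n → u <:+: W →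
      u.count true ≤ 2 * ((u.length + 5) / 6) := by
  intro n
  induction n using Nat.strong_induction_on with
  | _ n ih =>
    intro u hlen hu
    rcases le_or_gt u.length 6 with h6 | h6
    · have h1 := hsmall u hu h6
      have h0 : u.count true ≤ u.length := List.count_le_length
      omega
    · have h1 : u.take 6 <:+: W := ((List.take_prefix _ _).isInfix).trans hu
      have h2 : u.drop 6 <:+: W := ((List.drop_suffix _ _).isInfix).trans hu
      have c1 := hsmall _ h1 (by simp)
      have c2 := ih (u.drop 6).length (by simp; omega) _ rfl h2
      have hc : u.count true = (u.take 6).count true + (u.drop 6).count true := by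
        conv_lhs => rw [← List.take_append_drop 6 u]
        rw [List.count_append]
      simp only [List.length_drop] at c2
      omega

-- master check bridge
lemma checkOne_true {v : List (Fin 3)} (hv : v.length ≤ 5) : checkOne v = true := by
  have h := masterCheck_true
  rw [masterCheck, List.all_eq_true] at h
  exact h _ (mem_wordsLe 5 v hv)

lemma check_split {v : List (Fin 3)} (hv : v.length ≤ 5) (hsf : SquarefreeWord v) :
    ((List.range 7).all fun p => (p == 0) ||
      ((facs (hW v) (15*p/4+1)).all fun u => !periodB u p)) = true ∧
    (([4,6,8] : List ℕ).all fun L => (facs (hW v) L).all fun u => !antisqB u) = true ∧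
    ((List.range 7).all fun L => (facs (hW v) L).all fun u => decide (u.count true ≤ 2)) = true := by
  have h := checkOne_true hv
  rw [checkOne] at h
  have hsq : hasSquareB v = false := by
    rcases Bool.eq_false_or_eq_true (hasSquareB v) with h' | h'
    · exact absurd hsf (hasSquareB_spec h')
    · exact h'
  rw [hsq, Bool.false_or, Bool.and_eq_true, Bool.and_eq_true] at h
  exact ⟨h.1.1, h.1.2, h.2⟩

lemma no_period_factor {w : List (Fin 3)} (hw : SquarefreeWord w) {u : List Bool} {p : ℕ}
    (hu : u <:+: hW w) (hp1 : 1 ≤ p) (hp6 : p < 7) (hlen : u.length = 15*p/4+1)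
    (hper : HasPeriod u p) : False := by
  obtain ⟨v, hvw, huv, hvl⟩ := span_infix w u hu
  have hv5 : v.length ≤ 5 := by omega
  have h := (check_split hv5 (sqf_infix hw hvw)).1
  rw [List.all_eq_true] at h
  have h2 := h p (by simp [List.mem_range]; omega)
  have hp0 : (p == 0) = false := by simp; omega
  rw [hp0, Bool.false_or, List.all_eq_true] at h2
  have h4 := h2 u (mem_facs huv hlen)
  rw [periodB_spec hper (by omega)] at h4
  simp at h4

lemma count_small {w : List (Fin 3)} (hw : SquarefreeWord w) :
    ∀ f, f <:+: hW w → f.length ≤ 6 → f.count true ≤ 2 := by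
  intro f hf h6
  obtain ⟨v, hvw, hfv, hvl⟩ := span_infix w f hf
  have hv5 : v.length ≤ 5 := by omega
  have h := (check_split hv5 (sqf_infix hw hvw)).2.2
  rw [List.all_eq_true] at h
  have h2 := h f.length (by simp [List.mem_range]; omega)
  rw [List.all_eq_true] at h2
  have h3 := h2 f (mem_facs hfv rfl)
  simpa using h3

lemma no_antisq {w : List (Fin 3)} (hw : SquarefreeWord w) :
    ∀ u, u <:+: hW w → (u.length = 4 ∨ u.length = 6 ∨ u.length = 8) → ¬ Antisquare u := by
  intro u hu hL hA
  obtain ⟨v, hvw, huv, hvl⟩ := span_infix w u hu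
  have hv5 : v.length ≤ 5 := by omega
  have h := (check_split hv5 (sqf_infix hw hvw)).2.1
  rw [List.all_eq_true] at h
  have h2 := h u.length (by rcases hL with h'|h'|h' <;> simp [h'])
  rw [List.all_eq_true] at h2
  have h3 := h2 u (mem_facs huv rfl)
  rw [antisqB_spec hA] at h3
  simp at h3

lemma good_part {w : List (Fin 3)} (hw : SquarefreeWord w) : Good (hW w) := by
  intro u hu hA
  obtain ⟨y, hyne, hyeq⟩ := hA
  have hylen : 1 ≤ y.length := List.length_pos_iff.2 hyne
  have hclen : (comp y).length = y.length := by simp [comp]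
  have hulen : u.length = 2 * y.length := by rw [hyeq]; simp [hclen]; omega
  have hcount : u.count true = y.length := by rw [hyeq]; exact count_antisq y
  rcases le_or_gt 5 y.length with h5 | h5
  · exfalso
    have hch := count_chunks (hW w) (count_small hw) u.length u rfl hu
    omega
  · rcases (by omega : y.length = 1 ∨ (y.length = 2 ∨ y.length = 3 ∨ y.length = 4)) with h1 | h234
    · obtain ⟨b, rfl⟩ : ∃ b, y = [b] := by
        cases y with
        | nil => simp at hylen
        | cons b t =>
          cases t with
          | nil => exact ⟨b, rfl⟩
          | cons c t' => simp at h1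
      cases b
      · left; rw [hyeq]; rfl
      · right; rw [hyeq]; rfl
    · exfalso
      exact no_antisq hw u hu (by omega) ⟨y, hyne, hyeq⟩
-- cut positions
def cutP (w : List (Fin 3)) (t : ℕ) : ℕ := (hW (w.take t)).length

lemma getD_eq_gE3 (l : List (Fin 3)) (i : ℕ) (h : i < l.length) : l.getD i 0 = l[i] := by
  simp [List.getD_eq_getElem?_getD, List.getElem?_eq_getElem h]

lemma cutP_zero (w : List (Fin 3)) : cutP w 0 = 0 := rfl

lemma cutP_len (w : List (Fin 3)) : cutP w w.length = (hW w).length := by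
  rw [cutP, List.take_length]

lemma cutP_succ (w : List (Fin 3)) (t : ℕ) (h : t < w.length) :
    cutP w (t+1) = cutP w t + (hM (w.getD t 0)).length := by
  rw [cutP, cutP, List.take_succ, List.getElem?_eq_getElem h, getD_eq_gE3 w t h,
    hW_append, List.length_append]
  simp [hW]

lemma cutP_stable (w : List (Fin 3)) (t : ℕ) (h : w.length ≤ t) :
    cutP w t = (hW w).length := by
  rw [cutP, List.take_of_length_le h]

lemma cutP_mono (w : List (Fin 3)) : Monotone (cutP w) := by
  apply monotone_nat_of_le_succ
  intro t
  rcases lt_or_ge t w.length with h | h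
  · rw [cutP_succ w t h]; omega
  · rw [cutP_stable w t h, cutP_stable w (t+1) (by omega)]

lemma cutP_succ_ub (w : List (Fin 3)) (t : ℕ) : cutP w (t+1) ≤ cutP w t + 14 := by
  rcases lt_or_ge t w.length with h | h
  · rw [cutP_succ w t h]
    have := hM_len_ub (w.getD t 0)
    omega
  · rw [cutP_stable w t h, cutP_stable w (t+1) (by omega)]
    omega

lemma cutP_lb (w : List (Fin 3)) : ∀ (k t : ℕ), t + k ≤ w.length →
    cutP w t + 6*k ≤ cutP w (t+k) := by
  intro k
  induction k with
  | zero => intro t _; simp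
  | succ k ih =>
    intro t h
    have h1 := ih t (by omega)
    have h2 := cutP_succ w (t+k) (by omega)
    have h3 := hM_len_lb (w.getD (t+k) 0)
    have h4 : t + (k+1) = (t+k)+1 := rfl
    rw [h4]
    omega

lemma cutP_lt_of_lt (w : List (Fin 3)) (t t' : ℕ) (h : t < t') (h2 : t' ≤ w.length) :
    cutP w t < cutP w t' := by
  have h1 := cutP_lb w (t' - t) t (by omega)
  have h3 : t + (t' - t) = t' := by omega
  rw [h3] at h1
  omega

lemma index_lt_of_cutP_lt {w : List (Fin 3)} {t t' : ℕ} (h : cutP w t < cutP w t') :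
    t < t' := by
  by_contra h'
  push_neg at h'
  have := cutP_mono w h'
  omega

lemma drop_cutP (w : List (Fin 3)) (t : ℕ) :
    (hW w).drop (cutP w t) = hW (w.drop t) := by
  have h2 : hW (w.take t) ++ hW (w.drop t) = hW w := by
    rw [← hW_append, List.take_append_drop]
  rw [← h2, cutP, List.drop_left]

lemma readAt (w : List (Fin 3)) (t i : ℕ) :
    (hW w).getD (cutP w t + i) false = (hW (w.drop t)).getD i false := by
  rw [← drop_cutP, getD_drop]

lemma hM_facts : ∀ a : Fin 3, (hM a).getD 0 false = false ∧ (hM a).getD 1 false = true ∧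
    (hM a).getD ((hM a).length - 1) false = true := by decide

lemma no101 : ∀ a : Fin 3, ∀ o : ℕ, o < 14 → 1 ≤ o → o + 1 < (hM a).length →
    ¬((hM a).getD (o-1) false = true ∧ (hM a).getD o false = false ∧
      (hM a).getD (o+1) false = true) := by decide

lemma cut_char (w : List (Fin 3)) (t : ℕ) (h : t < w.length) :
    (hW w).getD (cutP w t) false = false ∧ (hW w).getD (cutP w t + 1) false = true := by
  have h0 := readAt w t 0
  have h1 := readAt w t 1
  rw [List.drop_eq_getElem_cons h, hW_cons] at h0 h1
  have hlb := hM_len_lb (w[t])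
  rw [Nat.add_zero] at h0
  constructor
  · rw [h0, getD_append_l _ _ 0 (by omega)]
    exact (hM_facts (w[t])).1
  · rw [h1, getD_append_l _ _ 1 (by omega)]
    exact (hM_facts (w[t])).2.1

lemma cut_char_left (w : List (Fin 3)) (t : ℕ) (h1 : 1 ≤ t) (h2 : t ≤ w.length) :
    (hW w).getD (cutP w t - 1) false = true := by
  have ht : t - 1 < w.length := by omega
  have hs := cutP_succ w (t-1) ht
  rw [show t - 1 + 1 = t from by omega, getD_eq_gE3 w (t-1) ht] at hs
  have hlb := hM_len_lb (w[t-1])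
  have idx : cutP w t - 1 = cutP w (t-1) + ((hM (w[t-1])).length - 1) := by omega
  rw [idx, readAt, List.drop_eq_getElem_cons ht, hW_cons,
    getD_append_l _ _ _ (by omega)]
  exact (hM_facts (w[t-1])).2.2

lemma exists_block (w : List (Fin 3)) (d : ℕ) (hd : d < (hW w).length) :
    ∃ t, t < w.length ∧ cutP w t ≤ d ∧ d < cutP w (t+1) := by
  have hex : ∃ t, d < cutP w t := ⟨w.length, by rw [cutP_len]; exact hd⟩
  have hfle : Nat.find hex ≤ w.length := Nat.find_le (by rw [cutP_len]; exact hd)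
  have hf0 : Nat.find hex ≠ 0 := by
    intro h0
    have := Nat.find_spec hex
    rw [h0, cutP_zero] at this
    omega
  refine ⟨Nat.find hex - 1, by omega, ?_, ?_⟩
  · have := Nat.find_min hex (m := Nat.find hex - 1) (by omega)
    omega
  · have := Nat.find_spec hex
    rwa [show Nat.find hex - 1 + 1 = Nat.find hex from by omega]

lemma cut_of_101 (w : List (Fin 3)) (d : ℕ) (hd : d < (hW w).length) (hd1 : 1 ≤ d)
    (c1 : (hW w).getD (d-1) false = true) (c0 : (hW w).getD d false = false)
    (c2 : (hW w).getD (d+1) false = true) :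
    ∃ t, t ≤ w.length ∧ cutP w t = d := by
  obtain ⟨t, htw, hle, hlt⟩ := exists_block w d hd
  set o := d - cutP w t with ho
  rcases Nat.eq_zero_or_pos o with h0 | hpos
  · exact ⟨t, le_of_lt htw, by omega⟩
  exfalso
  have hcs := cutP_succ w t htw
  rw [getD_eq_gE3 w t htw] at hcs
  have hblen : o < (hM (w[t])).length := by omega
  have hread : ∀ i, (hW w).getD (cutP w t + i) false =
      (hM (w[t]) ++ hW (w.drop (t+1))).getD i false := by
    intro i
    rw [readAt, List.drop_eq_getElem_cons htw, hW_cons]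
  have hub := hM_len_ub (w[t])
  -- position o = |hM a| - 1 would make char true
  rcases eq_or_lt_of_le (show o + 1 ≤ (hM (w[t])).length from hblen) with hlast | hmid
  · have hx : (hW w).getD d false = true := by
      rw [show d = cutP w t + o from by omega, hread o,
        getD_append_l _ _ o (by omega)]
      have hy := (hM_facts (w[t])).2.2
      rwa [show (hM (w[t])).length - 1 = o from by omega] at hy
    rw [c0] at hx; exact Bool.false_ne_true hx
  · apply no101 (w[t]) o (by omega) hpos hmid
    refine ⟨?_, ?_, ?_⟩
    · rw [show (hM (w[t])).getD (o-1) false = (hW w).getD (d-1) false from ?_, c1]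
      rw [show d - 1 = cutP w t + (o-1) from by omega, hread (o-1),
        getD_append_l _ _ _ (by omega)]
    · rw [show (hM (w[t])).getD o false = (hW w).getD d false from ?_, c0]
      rw [show d = cutP w t + o from by omega, hread o, getD_append_l _ _ _ (by omega)]
    · rw [show (hM (w[t])).getD (o+1) false = (hW w).getD (d+1) false from ?_, c2]
      rw [show d + 1 = cutP w t + (o+1) from by omega, hread (o+1),
        getD_append_l _ _ _ (by omega)]
lemma hM_len_cases : ∀ a : Fin 3, (hM a).length = 6 ∨ (hM a).length = 10 ∨ (hM a).length = 14 := by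
  decide

lemma no_big_period (w : List (Fin 3)) (hw : SquarefreeWord w) (s L p : ℕ) (hp : 7 ≤ p)
    (hsL : s + L ≤ (hW w).length)
    (hper : ∀ j, s ≤ j → j + p + 1 ≤ s + L → (hW w).getD j false = (hW w).getD (j+p) false)
    (hLlb : 15*p + 1 ≤ 4*L) : False := by
  have hL16 : p + 16 ≤ L := by omega
  have hex : ∃ t, s < cutP w t := ⟨w.length, by rw [cutP_len]; omega⟩
  have ht0 : s < cutP w (Nat.find hex) := Nat.find_spec hex
  set t0 := Nat.find hex with ht0def
  have ht0w : t0 ≤ w.length := Nat.find_le (by rw [cutP_len]; omega)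
  have ht0pos : 1 ≤ t0 := by
    rcases Nat.eq_zero_or_pos t0 with h0 | h1
    · rw [h0, cutP_zero] at ht0; omega
    · exact h1
  have hprev : ¬ s < cutP w (t0 - 1) := Nat.find_min hex (by omega)
  have hcub : cutP w t0 ≤ s + 14 := by
    have h1 := cutP_succ_ub w (t0 - 1)
    rw [show t0 - 1 + 1 = t0 from by omega] at h1
    omega
  have idxlt : ∀ t, t ≤ w.length → cutP w t < (hW w).length → t < w.length := by
    intro t h1 h2
    rcases eq_or_lt_of_le h1 with he | hl
    · rw [he, cutP_len] at h2; omega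
    · exact hl
  have idxpos : ∀ t, s < cutP w t → 1 ≤ t := by
    intro t h
    rcases Nat.eq_zero_or_pos t with h0 | h1
    · rw [h0, cutP_zero] at h; omega
    · exact h1
  have cutMapF : ∀ t, t ≤ w.length → s < cutP w t → cutP w t + p + 1 < s + L →
      ∃ t', t' ≤ w.length ∧ cutP w t' = cutP w t + p := by
    intro t htw hts htp
    have ht1 : 1 ≤ t := idxpos t hts
    have htlt : t < w.length := idxlt t htw (by omega)
    have hc1 := cut_char_left w t ht1 htw
    have hc0 := (cut_char w t htlt).1
    have hc2 := (cut_char w t htlt).2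
    have e1 : (hW w).getD (cutP w t - 1) false = (hW w).getD (cutP w t - 1 + p) false :=
      hper _ (by omega) (by omega)
    have e2 : (hW w).getD (cutP w t) false = (hW w).getD (cutP w t + p) false :=
      hper _ (by omega) (by omega)
    have e3 : (hW w).getD (cutP w t + 1) false = (hW w).getD (cutP w t + 1 + p) false :=
      hper _ (by omega) (by omega)
    apply cut_of_101 w (cutP w t + p) (by omega) (by omega)
    · rw [show cutP w t + p - 1 = cutP w t - 1 + p from by omega, ← e1]; exact hc1
    · rw [← e2]; exact hc0
    · rw [show cutP w t + p + 1 = cutP w t + 1 + p from by omega, ← e3]; exact hc2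
  have cutMapB : ∀ t, t ≤ w.length → s + p < cutP w t → cutP w t + 1 < s + L →
      ∃ t', t' ≤ w.length ∧ cutP w t' + p = cutP w t := by
    intro t htw hts htp
    have ht1 : 1 ≤ t := idxpos t (by omega)
    have htlt : t < w.length := idxlt t htw (by omega)
    have hc1 := cut_char_left w t ht1 htw
    have hc0 := (cut_char w t htlt).1
    have hc2 := (cut_char w t htlt).2
    have e1 : (hW w).getD (cutP w t - p - 1) false = (hW w).getD (cutP w t - 1) false := by
      have h := hper (cutP w t - p - 1) (by omega) (by omega)
      rwa [show cutP w t - p - 1 + p = cutP w t - 1 from by omega] at h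
    have e2 : (hW w).getD (cutP w t - p) false = (hW w).getD (cutP w t) false := by
      have h := hper (cutP w t - p) (by omega) (by omega)
      rwa [show cutP w t - p + p = cutP w t from by omega] at h
    have e3 : (hW w).getD (cutP w t - p + 1) false = (hW w).getD (cutP w t + 1) false := by
      have h := hper (cutP w t - p + 1) (by omega) (by omega)
      rwa [show cutP w t - p + 1 + p = cutP w t + 1 from by omega] at h
    obtain ⟨t', h1, h2⟩ := cut_of_101 w (cutP w t - p) (by omega) (by omega)
      (by rw [show cutP w t - p - 1 = cutP w t - p - 1 from rfl, e1]; exact hc1)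
      (by rw [e2]; exact hc0)
      (by rw [e3]; exact hc2)
    exact ⟨t', h1, by omega⟩
  obtain ⟨t1, ht1w, ht1c⟩ := cutMapF t0 ht0w ht0 (by omega)
  have ht01 : t0 < t1 := index_lt_of_cutP_lt (w := w) (t := t0) (t' := t1) (by omega)
  set m := t1 - t0 with hm
  have hm1 : 1 ≤ m := by omega
  rcases le_or_gt p 8 with h8 | h9
  · have hsum := cutP_lb w m t0 (by omega)
    rw [show t0 + m = t1 from by omega] at hsum
    have hmeq : m = 1 := by omega
    have hstep := cutP_succ w t0 (by omega)
    rw [show t0 + 1 = t1 from by omega] at hstep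
    have := hM_len_cases (w.getD t0 0)
    omega
  · have hL2 : 2*p + 16 ≤ L := by omega
    have key : ∀ k, k ≤ m → t0 + k + m ≤ w.length ∧
        cutP w (t0 + k + m) = cutP w (t0 + k) + p := by
      intro k
      induction k with
      | zero =>
        intro _
        simp only [Nat.add_zero]
        rw [show t0 + m = t1 from by omega]
        exact ⟨ht1w, ht1c⟩
      | succ k ih =>
        intro hk1
        obtain ⟨ih1, ih2⟩ := ih (by omega)
        have hj1w : t0 + k + 1 ≤ w.length := by omega
        have hjlow : s < cutP w (t0 + k + 1) := by
          have := cutP_mono w (show t0 ≤ t0 + k + 1 from by omega)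
          omega
        have hjupp : cutP w (t0 + k + 1) ≤ cutP w t0 + p := by
          have := cutP_mono w (show t0 + k + 1 ≤ t1 from by omega)
          omega
        obtain ⟨t', ht'w, ht'c⟩ := cutMapF (t0+k+1) hj1w hjlow (by omega)
        have hlt1 : cutP w (t0+k+m) < cutP w t' := by
          have := cutP_lt_of_lt w (t0+k) (t0+k+1) (by omega) hj1w
          omega
        have h2' : t0+k+m < t' := index_lt_of_cutP_lt hlt1
        have h3' : cutP w (t0+k+m+1) ≤ cutP w t' := cutP_mono w (by omega)
        rcases eq_or_lt_of_le h3' with heq | hlt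
        · refine ⟨by omega, ?_⟩
          rw [show t0+(k+1)+m = t0+k+m+1 from by omega,
            show t0+(k+1) = t0+k+1 from by omega, heq, ht'c]
        · exfalso
          have hlow2 : s + p < cutP w (t0+k+m+1) := by
            have := cutP_lt_of_lt w (t0+k+m) (t0+k+m+1) (by omega) (by omega)
            have := cutP_mono w (show t0 ≤ t0 + k from by omega)
            omega
          have hhi2 : cutP w (t0+k+m+1) + 1 < s + L := by omega
          obtain ⟨t'', ht''w, ht''c⟩ := cutMapB (t0+k+m+1) (by omega) hlow2 hhi2
          have hA : cutP w (t0+k) < cutP w t'' := by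
            have := cutP_lt_of_lt w (t0+k+m) (t0+k+m+1) (by omega) (by omega)
            omega
          have hB : cutP w t'' < cutP w (t0+k+1) := by omega
          have hA' := index_lt_of_cutP_lt hA
          have hB' := index_lt_of_cutP_lt hB
          omega
    have hletters : ∀ k, k < m → w.getD (t0+k) 0 = w.getD (t0+k+m) 0 := by
      intro k hk
      obtain ⟨b1, e1⟩ := key k (le_of_lt hk)
      obtain ⟨b2, e2⟩ := key (k+1) hk
      have s1 := cutP_succ w (t0+k) (by omega)
      have s2 := cutP_succ w (t0+k+m) (by omega)
      rw [show t0+(k+1)+m = (t0+k+m)+1 from by omega,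
        show t0+(k+1) = (t0+k)+1 from by omega] at e2
      have hlen : (hM (w.getD (t0+k) 0)).length = (hM (w.getD (t0+k+m) 0)).length := by
        omega
      exact hM_len_inj hlen
    have h2m : t0 + 2*m ≤ w.length := by
      have := (key m le_rfl).1
      omega
    set v := (w.drop t0).take m with hv
    have hvlen : v.length = m := by rw [hv]; simp; omega
    have hvne : v ≠ [] := by
      intro h
      rw [h] at hvlen
      simp at hvlen
      omega
    have hsecond : (w.drop (t0+m)).take m = v := by
      rw [hv]
      apply List.ext_getElem
      · simp; omega
      · intro n h1 h2
        simp only [List.getElem_take, List.getElem_drop]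
        have hn : n < m := by simp at h1; omega
        have hl := hletters n hn
        rw [← getD_eq_gE3 w (t0+m+n) (by omega), ← getD_eq_gE3 w (t0+n) (by omega)]
        rw [show t0+m+n = t0+n+m from by omega]
        exact hl.symm
    have hsq : v ++ v = (w.drop t0).take (m + m) := by
      rw [List.take_add, List.drop_drop, hsecond, ← hv]
    exact hw v hvne (by
      rw [hsq]
      exact ((List.take_prefix _ _).isInfix).trans ((List.drop_suffix _ _).isInfix))
lemma period_nonempty (u : List Bool) (hu : u ≠ []) : HasPeriod u u.length :=
  ⟨List.length_pos_iff.2 hu, fun i hi => by omega⟩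

lemma exp_le (w : List (Fin 3)) (hw : SquarefreeWord w) :
    ∀ u, u <:+: hW w → u ≠ [] → exponent u ≤ 15 / 4 := by
  intro u hu hne
  have hSne : Set.Nonempty {p : ℕ | HasPeriod u p} := ⟨u.length, period_nonempty u hne⟩
  have hnS : sInf {p : ℕ | HasPeriod u p} ∈ {p : ℕ | HasPeriod u p} := Nat.sInf_mem hSne
  set n := sInf {p : ℕ | HasPeriod u p} with hn
  have hper : HasPeriod u n := hnS
  have hn1 : 1 ≤ n := hper.1
  have hkey : 4 * u.length ≤ 15 * n := by
    by_contra hcon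
    push_neg at hcon
    obtain ⟨s, hsL, he⟩ := (infix_iff_exists u _).1 hu
    rcases lt_or_ge n 7 with h7 | h7
    · have hFle : 15*n/4+1 ≤ u.length := by omega
      have huF : (u.take (15*n/4+1)) <:+: hW w := ((List.take_prefix _ _).isInfix).trans hu
      have hlenF : (u.take (15*n/4+1)).length = 15*n/4+1 := by simp; omega
      have hperF : HasPeriod (u.take (15*n/4+1)) n := by
        refine ⟨hn1, ?_⟩
        intro i hi
        rw [hlenF] at hi
        rw [getD_take _ _ _ (by omega), getD_take _ _ _ (by omega)]
        exact hper.2 i (by omega)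
      exact no_period_factor hw huF hn1 h7 hlenF hperF
    · apply no_big_period w hw s u.length n h7 hsL ?_ (by omega)
      intro j h1 h2
      have hg1 : u.getD (j - s) false = (hW w).getD j false := by
        have hg := getD_of_infix he (show j - s < u.length from by omega)
        rwa [show s + (j - s) = j from by omega] at hg
      have hg2 : u.getD (j - s + n) false = (hW w).getD (j + n) false := by
        have hg := getD_of_infix he (show j - s + n < u.length from by omega)
        rwa [show s + (j - s + n) = j + n from by omega] at hg
      rw [← hg1, ← hg2]
      exact hper.2 (j - s) (by omega)
  rw [exponent, ← hn]
  rw [div_le_div_iff₀ (by exact_mod_cast hn1) (by norm_num)]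
  exact_mod_cast (by omega : u.length * 4 ≤ 15 * n)

def ustar : List Bool := [false, true, false, false, false, true, false, false, false, true,
  false, false, false, true, false]

lemma ustar_period4 : HasPeriod ustar 4 := by
  refine ⟨by norm_num, ?_⟩
  intro i hi
  have hi' : i < 11 := by simp [ustar] at hi; omega
  interval_cases i <;> rfl

lemma ustar_sInf : sInf {p : ℕ | HasPeriod ustar p} = 4 := by
  have h4 : HasPeriod ustar 4 := ustar_period4
  have hle : sInf {p : ℕ | HasPeriod ustar p} ≤ 4 := Nat.sInf_le h4
  have hmem : HasPeriod ustar (sInf {p : ℕ | HasPeriod ustar p}) :=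
    Nat.sInf_mem (⟨4, h4⟩ : Set.Nonempty {p : ℕ | HasPeriod ustar p})
  set n := sInf {p : ℕ | HasPeriod ustar p} with hn
  have h1 : 1 ≤ n := hmem.1
  interval_cases n
  · exact absurd (hmem.2 0 (by norm_num [ustar])) (by decide)
  · exact absurd (hmem.2 1 (by norm_num [ustar])) (by decide)
  · exact absurd (hmem.2 1 (by norm_num [ustar])) (by decide)
  · rfl

lemma ustar_exp : exponent ustar = 15 / 4 := by
  rw [exponent, ustar_sInf]
  norm_num [ustar]

lemma hM_take1 : ∀ a : Fin 3, (hM a).take 1 = [false] ∧ 1 - (hM a).length = 0 := by decide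

lemma attain (w : List (Fin 3)) (hw : SquarefreeWord w) (h5 : 5 ≤ w.length) :
    ∃ u, u <:+: hW w ∧ u ≠ [] ∧ exponent u = 15 / 4 := by
  have hi : ∃ i, i < 4 ∧ w.getD i 0 = 2 := by
    by_contra hno
    push_neg at hno
    have hlen4 : (w.take 4).length = 4 := by simp; omega
    have hch := check4_true
    rw [check4, List.all_eq_true] at hch
    have h2 := hch (w.take 4) (mem_wordsLe 4 (w.take 4) (by simp))
    have hno2 : ((w.take 4).any (fun a => a == 2)) = false := by
      apply List.any_eq_false.2
      intro x hx
      obtain ⟨k, hk, hkx⟩ := List.mem_iff_getElem.1 hx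
      have hk4 : k < 4 := by simp at hk; omega
      have hne2 := hno k hk4
      rw [getD_eq_gE3 w k (by omega)] at hne2
      rw [List.getElem_take] at hkx
      simp [← hkx, hne2]
    rw [hno2, hlen4] at h2
    simp only [beq_self_eq_true, Bool.not_true, Bool.false_or, Bool.or_false] at h2
    exact hasSquareB_spec h2 (sqf_infix hw ((List.take_prefix _ _).isInfix))
  obtain ⟨i, hi4, hi2⟩ := hi
  have hiw : i < w.length := by omega
  have hi1 : i + 1 < w.length := by omega
  rw [getD_eq_gE3 w i hiw] at hi2
  refine ⟨ustar, ?_, by simp [ustar], ustar_exp⟩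
  apply (infix_iff_exists _ _).2
  have hrw : (hW w).drop (cutP w i) = hM 2 ++ (hM (w[i+1]) ++ hW (w.drop (i+1+1))) := by
    rw [drop_cutP, List.drop_eq_getElem_cons hiw, hW_cons, hi2,
      List.drop_eq_getElem_cons hi1, hW_cons]
  refine ⟨cutP w i, ?_, ?_⟩
  · have hs1 := cutP_succ w i hiw
    rw [getD_eq_gE3 w i hiw, hi2] at hs1
    have hs2 := cutP_succ w (i+1) hi1
    have hlb := hM_len_lb (w.getD (i+1) 0)
    have hmono := cutP_mono w (show i+1+1 ≤ w.length from by omega)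
    rw [cutP_len] at hmono
    have hu15 : ustar.length = 15 := by decide
    have h14 : (hM 2).length = 14 := by decide
    omega
  · rw [show ustar.length = 15 from by decide, hrw,
      show (15:ℕ) = (hM 2).length + 1 from by decide, List.take_length_add_append,
      List.take_append, (hM_take1 _).1, (hM_take1 _).2,
      List.take_zero, List.append_nil]
    decide

end Stmt18

/-- for every squarefree ternary word w, h(w) is good and every
nonempty factor of h(w) has exponent ≤ 15/4; if |w| ≥ 5 the exponent 15/4 is
attained. -/
theorem stmt_18 (w : List (Fin 3)) (hw : SquarefreeWord w) :
    Good ((w.map hM).flatten) ∧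
    (∀ u, u <:+: (w.map hM).flatten → u ≠ [] → exponent u ≤ 15 / 4) ∧
    (5 ≤ w.length →
      ∃ u, u <:+: (w.map hM).flatten ∧ u ≠ [] ∧ exponent u = 15 / 4) :=
  ⟨Stmt18.good_part hw, Stmt18.exp_le w hw, fun h5 => Stmt18.attain w hw h5⟩
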